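/- If a finite set S of pairwise orthogonal unit vectors in ℂ^2 ⊗ ℂ^d consists only of product vectors, then S can be extended to an orthonormal basis of ℂ^2 ⊗ ℂ^d consisting only of product vectors. -/

import Mathlib

noncomputable section

/-- A product vector of `ℂ^2 ⊗ ℂ^d`. -/
def IsProdVec {d : ℕ} (x : EuclideanSpace ℂ (Fin 2 × Fin d)) : Prop :=
  ∃ (u : Fin 2 → ℂ) (v : Fin d → ℂ), x = WithLp.toLp 2 (fun p : Fin 2 × Fin d => u p.1 * v p.2)

open Finset Submodule
open scoped ComplexConjugate InnerProductSpace

namespace Stmt17Aux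

variable {F : Type} [NormedAddCommGroup F] [InnerProductSpace ℂ F]

/-- `ℂ² ⊗ F` as an L² pi type. -/
abbrev E2 (F : Type) [NormedAddCommGroup F] [InnerProductSpace ℂ F] : Type :=
  PiLp 2 (fun _ : Fin 2 => F)

def tensor (u : Fin 2 → ℂ) (v : F) : E2 F := WithLp.toLp 2 (fun i => u i • v)

def IsProd (x : E2 F) : Prop := ∃ u v, x = tensor u v

/-- inner product on the `ℂ²` factor -/
def iu (u u' : Fin 2 → ℂ) : ℂ := conj (u 0) * u' 0 + conj (u 1) * u' 1

lemma iu_conj (u u' : Fin 2 → ℂ) : iu u' u = conj (iu u u') := by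
  simp [iu, map_add, map_mul, mul_comm]

lemma inner_tensor (u u' : Fin 2 → ℂ) (v v' : F) :
    ⟪tensor u v, tensor u' v'⟫_ℂ = iu u u' * ⟪v, v'⟫_ℂ := by
  rw [PiLp.inner_apply]
  simp [tensor, iu, Fin.sum_univ_two, inner_smul_left, inner_smul_right]
  ring

lemma tensor_add_right (u : Fin 2 → ℂ) (a b : F) :
    tensor u (a + b) = tensor u a + tensor u b := by
  ext i; simp [tensor, smul_add]

lemma tensor_smul_right (u : Fin 2 → ℂ) (c : ℂ) (a : F) :
    tensor u (c • a) = c • tensor u a := by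
  ext i; show u i • (c • a) = c • (u i • a); rw [smul_comm]

lemma tensor_add_left (u u' : Fin 2 → ℂ) (a : F) :
    tensor (u + u') a = tensor u a + tensor u' a := by
  ext i; simp [tensor, add_smul]

lemma tensor_smul_left (u : Fin 2 → ℂ) (c : ℂ) (a : F) :
    tensor (c • u) a = c • tensor u a := by
  ext i; show (c * u i) • a = c • (u i • a); rw [mul_smul]

lemma norm_one_iff_inner_self {E : Type*} [NormedAddCommGroup E] [InnerProductSpace ℂ E]
    (x : E) : ‖x‖ = 1 ↔ ⟪x, x⟫_ℂ = 1 := by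
  rw [inner_self_eq_norm_sq_to_K]
  constructor
  · intro h; rw [h]; norm_num
  · intro h
    have : (‖x‖ : ℂ) ^ 2 = 1 := h
    have h2 : ‖x‖ ^ 2 = 1 := by exact_mod_cast this
    nlinarith [norm_nonneg x]

/-- tensor of unit vectors is a unit vector -/
lemma norm_tensor_one {u : Fin 2 → ℂ} {v : F} (hu : iu u u = 1) (hv : ‖v‖ = 1) :
    ‖tensor u v‖ = 1 := by
  rw [norm_one_iff_inner_self, inner_tensor, hu, one_mul,
    ← norm_one_iff_inner_self]; exact hv

def wperp (w : Fin 2 → ℂ) : Fin 2 → ℂ := fun i => if i = 0 then -(conj (w 1)) else conj (w 0)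

lemma iu_wperp (w : Fin 2 → ℂ) : iu w (wperp w) = 0 := by
  simp [iu, wperp]; ring

lemma iu_wperp_self {w : Fin 2 → ℂ} (hw : iu w w = 1) : iu (wperp w) (wperp w) = 1 := by
  simp only [iu, wperp] at *
  simp only [map_neg, Complex.conj_conj, if_pos, if_neg]
  norm_num
  linear_combination hw

/-- expansion of the ℂ² inner product in the `w, wperp` basis -/
lemma iu_expand {w : Fin 2 → ℂ} (hw : iu w w = 1) (u u' : Fin 2 → ℂ) :
    iu u u' = conj (iu w u) * iu w u' + conj (iu (wperp w) u) * iu (wperp w) u' := by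
  simp only [iu, wperp] at *
  simp only [map_add, map_mul, map_neg, Complex.conj_conj, reduceIte,
    show ((1:Fin 2) = 0) = False by simp [Fin.ext_iff], if_false]
  linear_combination (-(conj (u 0) * u' 0 + conj (u 1) * u' 1)) * hw


lemma orthonormal_finset {E : Type*} [NormedAddCommGroup E] [InnerProductSpace ℂ E]
    (T : Finset E) (hnorm : ∀ x ∈ T, ‖x‖ = 1)
    (horth : ∀ x ∈ T, ∀ y ∈ T, x ≠ y → ⟪x, y⟫_ℂ = 0) :
    Orthonormal ℂ (fun x : T => (x : E)) := by
  classical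
  rw [orthonormal_iff_ite]
  rintro ⟨i, hi⟩ ⟨j, hj⟩
  by_cases h : i = j
  · subst h
    rw [show (⟪i, i⟫_ℂ) = 1 from (norm_one_iff_inner_self i).1 (hnorm i hi)]
    simp
  · simp only [Subtype.mk.injEq]
    rw [if_neg h]
    exact horth i hi j hj h

lemma orthonormal_finset' {E : Type*} [NormedAddCommGroup E] [InnerProductSpace ℂ E]
    {T : Finset E} (h : Orthonormal ℂ (fun x : T => (x : E))) :
    (∀ x ∈ T, ‖x‖ = 1) ∧ (∀ x ∈ T, ∀ y ∈ T, x ≠ y → ⟪x, y⟫_ℂ = 0) := by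
  classical
  rw [orthonormal_iff_ite] at h
  constructor
  · intro x hx
    rw [norm_one_iff_inner_self]
    simpa using h ⟨x, hx⟩ ⟨x, hx⟩
  · intro x hx y hy hxy
    simpa [Subtype.ext_iff, hxy] using h ⟨x, hx⟩ ⟨y, hy⟩

/-- a unit product vector has a normalized product representation -/
lemma exists_normalized {x : E2 F} (hx : IsProd x) (hn : ‖x‖ = 1) :
    ∃ u v, x = tensor u v ∧ iu u u = 1 ∧ ‖v‖ = 1 := by
  obtain ⟨u, v, rfl⟩ := hx
  have hv : v ≠ 0 := by
    rintro rfl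
    have h0 : tensor u (0 : F) = 0 := by ext i; simp [tensor]
    rw [h0] at hn; simp at hn
  have hvn : (‖v‖ : ℂ) ≠ 0 := by exact_mod_cast norm_eq_zero.not.2 hv
  have key : iu u u * ⟪v, v⟫_ℂ = 1 := by
    rw [← inner_tensor]; exact (norm_one_iff_inner_self _).1 hn
  refine ⟨fun i => (‖v‖ : ℂ) * u i, ((‖v‖ : ℂ))⁻¹ • v, ?_, ?_, ?_⟩
  · ext i
    show u i • v = ((‖v‖:ℂ) * u i) • (((‖v‖:ℂ))⁻¹ • v)
    rw [smul_smul]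
    congr 1
    field_simp
  · have h2 : ⟪v, v⟫_ℂ = (‖v‖ : ℂ) ^ 2 := inner_self_eq_norm_sq_to_K (𝕜 := ℂ) v
    simp only [iu, map_mul, Complex.conj_ofReal] at *
    linear_combination key - (conj (u 0) * u 0 + conj (u 1) * u 1) * h2
  · rw [norm_smul, norm_inv]
    have : ‖((‖v‖ : ℝ) : ℂ)‖ = ‖v‖ := by
      simp [Complex.norm_real, abs_of_nonneg (norm_nonneg v)]
    rw [this]
    field_simp


lemma tensor_decomp {w : Fin 2 → ℂ} (hw : iu w w = 1) (u : Fin 2 → ℂ) (v : F) :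
    tensor u v = iu w u • tensor w v + iu (wperp w) u • tensor (wperp w) v := by
  ext i
  show u i • v = iu w u • (w i • v) + iu (wperp w) u • (wperp w i • v)
  rw [smul_smul, smul_smul, ← add_smul]
  congr 1
  have h1 : ((1:Fin 2) = 0) = False := by simp [Fin.ext_iff]
  have hw' : conj (w 0) * w 0 + conj (w 1) * w 1 = 1 := hw
  rcases (by decide : ∀ j : Fin 2, j = 0 ∨ j = 1) i with rfl | rfl
  · simp only [iu, wperp, map_add, map_mul, map_neg, Complex.conj_conj, reduceIte, h1, if_false]
    linear_combination (-(u 0)) * hw'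
  · simp only [iu, wperp, map_add, map_mul, map_neg, Complex.conj_conj, reduceIte, h1, if_false]
    linear_combination (-(u 1)) * hw'

def tensorR (w : Fin 2 → ℂ) : F →ₗ[ℂ] E2 F where
  toFun v := tensor w v
  map_add' := tensor_add_right w
  map_smul' c a := tensor_smul_right w c a

lemma tensor_ne_zero_left {w : Fin 2 → ℂ} (hw : iu w w = 1) : w ≠ 0 := by
  rintro rfl; simp [iu] at hw

lemma tensor_left_inj {w : Fin 2 → ℂ} (hw : iu w w = 1) {a b : F}
    (h : tensor w a = tensor w b) : a = b := by
  have hwne : w ≠ 0 := tensor_ne_zero_left hw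
  obtain ⟨i, hi⟩ : ∃ i, w i ≠ 0 := by
    by_contra hc; push_neg at hc; exact hwne (funext hc)
  have := congrFun (congrArg WithLp.ofLp h) i
  simpa [tensor, smul_right_injective F hi] using smul_right_injective F hi this

lemma block [FiniteDimensional ℂ F] (H : Submodule ℂ F) {w : Fin 2 → ℂ} (hw : iu w w = 1)
    (P Q : Finset F) (hPH : ∀ p ∈ P, p ∈ H) (hQH : ∀ q ∈ Q, q ∈ H)
    (hPon : Orthonormal ℂ (fun x : P => (x : F)))
    (hQon : Orthonormal ℂ (fun x : Q => (x : F))) :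
    ∃ TH : Finset (E2 F),
      (∀ p ∈ P, tensor w p ∈ TH) ∧ (∀ q ∈ Q, tensor (wperp w) q ∈ TH) ∧
      (∀ z ∈ TH, ∃ uu vv, z = tensor uu vv ∧ iu uu uu = 1 ∧ ‖vv‖ = 1 ∧ vv ∈ H) ∧
      Orthonormal ℂ (fun x : TH => (x : E2 F)) ∧
      (∀ (uu : Fin 2 → ℂ) (v : F), v ∈ H → tensor uu v ∈ span ℂ (TH : Set (E2 F))) := by
  classical
  have hwp0 : iu w (wperp w) = 0 := iu_wperp w
  have hwp0' : iu (wperp w) w = 0 := by rw [iu_conj, hwp0, map_zero]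
  have hwp1 : iu (wperp w) (wperp w) = 1 := iu_wperp_self hw
  have hPd := orthonormal_finset' hPon
  have hQd := orthonormal_finset' hQon
  -- lift to subtype sets and extend to orthonormal bases of H
  have key : ∀ (R : Finset F), (∀ p ∈ R, p ∈ H) → (∀ x ∈ R, ‖x‖ = 1) →
      (∀ x ∈ R, ∀ y ∈ R, x ≠ y → ⟪x, y⟫_ℂ = 0) →
      ∃ uR : Finset ↥H, (∀ p : F, p ∈ R → ∃ z ∈ uR, (z : F) = p) ∧
        (∀ z ∈ uR, ‖(z : ↥H)‖ = 1) ∧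
        (∀ z1 ∈ uR, ∀ z2 ∈ uR, z1 ≠ z2 → ⟪(z1 : ↥H), (z2 : ↥H)⟫_ℂ = 0) ∧
        span ℂ (uR : Set ↥H) = ⊤ := by
    intro R hRH hRn hRo
    set R' : Set ↥H := {z : ↥H | (z : F) ∈ R} with hR'
    have hON : Orthonormal ℂ ((↑) : R' → ↥H) := by
      rw [orthonormal_subtype_iff_ite]
      intro z hz z' hz'
      by_cases h : z = z'
      · subst h
        rw [if_pos rfl, Submodule.coe_inner, ← norm_one_iff_inner_self]
        exact hRn _ hz
      · rw [if_neg h, Submodule.coe_inner]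
        exact hRo _ hz _ hz' (fun hc => h (Subtype.ext hc))
    obtain ⟨u, b, hsub, hb⟩ := hON.exists_orthonormalBasis_extension
    refine ⟨u, ?_, ?_, ?_, ?_⟩
    · intro p hp
      exact ⟨⟨p, hRH p hp⟩, Finset.mem_coe.1 (hsub hp), rfl⟩
    · intro z hz
      have := b.orthonormal.1 ⟨z, hz⟩
      rwa [hb] at this
    · intro z1 hz1 z2 hz2 hne
      have := b.orthonormal.2 (i := ⟨z1, hz1⟩) (j := ⟨z2, hz2⟩)
        (fun hc => hne (congrArg Subtype.val hc))
      rwa [hb] at this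
    · have := b.toBasis.span_eq
      rwa [b.coe_toBasis, hb, Subtype.range_coe] at this
  obtain ⟨uP, huP1, huP2, huP3, huP4⟩ := key P hPH hPd.1 hPd.2
  obtain ⟨uQ, huQ1, huQ2, huQ3, huQ4⟩ := key Q hQH hQd.1 hQd.2
  refine ⟨uP.image (fun p : ↥H => tensor w (p : F)) ∪ uQ.image (fun q : ↥H => tensor (wperp w) (q : F)),
    ?_, ?_, ?_, ?_, ?_⟩
  · intro p hp
    obtain ⟨z, hz, hzp⟩ := huP1 p hp
    exact Finset.mem_union_left _ (Finset.mem_image.2 ⟨z, hz, by rw [hzp]⟩)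
  · intro q hq
    obtain ⟨z, hz, hzq⟩ := huQ1 q hq
    exact Finset.mem_union_right _ (Finset.mem_image.2 ⟨z, hz, by rw [hzq]⟩)
  · intro z hz
    rcases Finset.mem_union.1 hz with hz | hz
    · obtain ⟨p, hp, rfl⟩ := Finset.mem_image.1 hz
      exact ⟨w, p, rfl, hw, huP2 p hp, p.2⟩
    · obtain ⟨q, hq, rfl⟩ := Finset.mem_image.1 hz
      exact ⟨wperp w, q, rfl, hwp1, huQ2 q hq, q.2⟩
  · apply orthonormal_finset
    · intro x hx
      rcases Finset.mem_union.1 hx with hx | hx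
      · obtain ⟨p, hp, rfl⟩ := Finset.mem_image.1 hx
        exact norm_tensor_one hw (huP2 p hp)
      · obtain ⟨q, hq, rfl⟩ := Finset.mem_image.1 hx
        exact norm_tensor_one hwp1 (huQ2 q hq)
    · intro x hx y hy hxy
      rcases Finset.mem_union.1 hx with hx | hx <;>
        rcases Finset.mem_union.1 hy with hy | hy
      · obtain ⟨p, hp, rfl⟩ := Finset.mem_image.1 hx
        obtain ⟨p', hp', rfl⟩ := Finset.mem_image.1 hy
        have hne : (p : F) ≠ (p' : F) := fun h => hxy (by rw [h])
        rw [inner_tensor, ← Submodule.coe_inner,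
          huP3 p hp p' hp' (fun h => hne (by rw [h])), mul_zero]
      · obtain ⟨p, hp, rfl⟩ := Finset.mem_image.1 hx
        obtain ⟨q, hq, rfl⟩ := Finset.mem_image.1 hy
        rw [inner_tensor, hwp0, zero_mul]
      · obtain ⟨q, hq, rfl⟩ := Finset.mem_image.1 hx
        obtain ⟨p, hp, rfl⟩ := Finset.mem_image.1 hy
        rw [inner_tensor, hwp0', zero_mul]
      · obtain ⟨q, hq, rfl⟩ := Finset.mem_image.1 hx
        obtain ⟨q', hq', rfl⟩ := Finset.mem_image.1 hy
        have hne : (q : F) ≠ (q' : F) := fun h => hxy (by rw [h])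
        rw [inner_tensor, ← Submodule.coe_inner,
          huQ3 q hq q' hq' (fun h => hne (by rw [h])), mul_zero]
  · intro uu v hv
    rw [tensor_decomp hw uu v]
    have main : ∀ (w' : Fin 2 → ℂ) (uR : Finset ↥H),
        span ℂ (uR : Set ↥H) = ⊤ →
        (∀ z ∈ uR, tensor w' (z : F) ∈
          ((uP.image (fun p : ↥H => tensor w (p : F)) ∪
            uQ.image (fun q : ↥H => tensor (wperp w) (q : F)) : Finset (E2 F)) : Set (E2 F))) →
        tensor w' v ∈ span ℂ
          ((uP.image (fun p : ↥H => tensor w (p : F)) ∪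
            uQ.image (fun q : ↥H => tensor (wperp w) (q : F)) : Finset (E2 F)) : Set (E2 F)) := by
      intro w' uR hspan hmem
      have hvH : (⟨v, hv⟩ : ↥H) ∈ span ℂ (uR : Set ↥H) := by
        rw [hspan]; trivial
      have := Submodule.apply_mem_span_image_of_mem_span
        ((tensorR w').comp H.subtype) hvH
      refine span_mono ?_ this
      rintro _ ⟨z, hz, rfl⟩
      exact hmem z hz
    refine Submodule.add_mem _ (Submodule.smul_mem _ _ ?_) (Submodule.smul_mem _ _ ?_)
    · exact main w uP huP4 (fun z hz => Finset.mem_coe.2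
        (Finset.mem_union_left _ (Finset.mem_image_of_mem _ hz)))
    · exact main (wperp w) uQ huQ4 (fun z hz => Finset.mem_coe.2
        (Finset.mem_union_right _ (Finset.mem_image_of_mem _ hz)))


/-- the isometric embedding of `ℂ² ⊗ K` into `ℂ² ⊗ F` for a subspace `K` -/
def emb (K : Submodule ℂ F) : E2 ↥K →ₗᵢ[ℂ] E2 F :=
  LinearMap.isometryOfInner
    { toFun := fun g => (WithLp.toLp 2 (fun i => (g i : F)) : E2 F)
      map_add' := fun g h => by ext i; simp [Submodule.coe_add]
      map_smul' := fun c g => by ext i; simp [Submodule.coe_smul] }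
    (by
      intro x y
      rw [PiLp.inner_apply, PiLp.inner_apply]
      exact Finset.sum_congr rfl fun i _ => (Submodule.coe_inner _ _ _).symm)

lemma emb_apply (K : Submodule ℂ F) (g : E2 ↥K) (i : Fin 2) : (emb K g) i = (g i : F) := rfl

lemma emb_tensor (K : Submodule ℂ F) (u : Fin 2 → ℂ) (v : ↥K) :
    emb K (tensor u v) = tensor u (v : F) := by
  ext i
  show ((u i • v : ↥K) : F) = u i • (v : F)
  simp

lemma cross_orth (K : Submodule ℂ F) {vv : F} (hvv : vv ∈ K) (uu : Fin 2 → ℂ) (z : E2 ↥Kᗮ) :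
    ⟪tensor uu vv, emb Kᗮ z⟫_ℂ = 0 := by
  rw [PiLp.inner_apply]
  refine Finset.sum_eq_zero fun i _ => ?_
  show ⟪uu i • vv, ((z i : F))⟫_ℂ = 0
  rw [inner_smul_left, Submodule.inner_right_of_mem_orthogonal hvv (z i).2, mul_zero]

lemma span_top [FiniteDimensional ℂ F] (M : Submodule ℂ (E2 F)) (H : Submodule ℂ F)
    (h1 : ∀ (u : Fin 2 → ℂ), ∀ v ∈ H, tensor u v ∈ M)
    (h2 : ∀ (u : Fin 2 → ℂ), ∀ v ∈ Hᗮ, tensor u v ∈ M) : M = ⊤ := by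
  classical
  rw [eq_top_iff']
  intro g
  have hg : g = tensor (fun j => if j = 0 then 1 else 0) (g 0)
      + tensor (fun j => if j = 1 then 1 else 0) (g 1) := by
    ext i
    show g i = (if i = 0 then (1:ℂ) else 0) • g 0 + (if i = 1 then (1:ℂ) else 0) • g 1
    rcases (by decide : ∀ j : Fin 2, j = 0 ∨ j = 1) i with rfl | rfl <;> simp
  have key : ∀ (u : Fin 2 → ℂ) (v : F), tensor u v ∈ M := by
    intro u v
    have hv : v ∈ H ⊔ Hᗮ := by
      rw [Submodule.sup_orthogonal_of_hasOrthogonalProjection]; trivial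
    obtain ⟨a, ha, b, hb, hab⟩ := Submodule.mem_sup.1 hv
    rw [← hab, tensor_add_right]
    exact Submodule.add_mem _ (h1 u a ha) (h2 u b hb)
  rw [hg]
  exact Submodule.add_mem _ (key _ _) (key _ _)


lemma norm_one_of_conj_mul {a : ℂ} (h : conj a * a = 1) : ‖a‖ = 1 := by
  have h2 : (Complex.normSq a : ℂ) = 1 := by
    rw [Complex.normSq_eq_conj_mul_self]; exact h
  have h3 : Complex.normSq a = 1 := by exact_mod_cast h2
  have := Complex.normSq_eq_norm_sq a
  nlinarith [norm_nonneg a]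

lemma ne_zero_of_conj_mul {a : ℂ} (h : conj a * a = 1) : a ≠ 0 := by
  rintro rfl; simp at h

lemma aux : ∀ (n : ℕ) (F : Type) [NormedAddCommGroup F] [InnerProductSpace ℂ F]
    [FiniteDimensional ℂ F], Module.finrank ℂ F = n →
    ∀ S : Finset (E2 F), (∀ x ∈ S, IsProd x) →
    Orthonormal ℂ (fun x : S => (x : E2 F)) →
    ∃ T : Finset (E2 F), S ⊆ T ∧ (∀ x ∈ T, IsProd x) ∧
      Orthonormal ℂ (fun x : T => (x : E2 F)) ∧ span ℂ (T : Set (E2 F)) = ⊤ := by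
  intro n
  induction n using Nat.strong_induction_on with
  | _ n IH =>
  intro F _ _ _ hrank S hSp hSon
  classical
  rcases S.eq_empty_or_nonempty with rfl | ⟨x₀, hx₀⟩
  · -- base case : empty set, build any product basis
    have he : iu (fun j : Fin 2 => if j = 0 then (1:ℂ) else 0)
        (fun j : Fin 2 => if j = 0 then (1:ℂ) else 0) = 1 := by simp [iu]
    obtain ⟨TH, _, _, hTH3, hTH4, hTH5⟩ := block (F := F) ⊤ he ∅ ∅
      (by simp) (by simp)
      (orthonormal_finset _ (by simp) (by simp))
      (orthonormal_finset _ (by simp) (by simp))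
    refine ⟨TH, by simp, fun z hz => ?_, hTH4, ?_⟩
    · obtain ⟨uu, vv, hzz, -, -, -⟩ := hTH3 z hz
      exact ⟨uu, vv, hzz⟩
    · exact span_top _ ⊤ (fun u v _ => hTH5 u v trivial)
        (fun u v _ => hTH5 u v trivial)
  · have hSd := orthonormal_finset' hSon
    have hrep : ∀ x ∈ S, ∃ u v, x = tensor u v ∧ iu u u = 1 ∧ ‖v‖ = 1 :=
      fun x hx => exists_normalized (hSp x hx) (hSd.1 x hx)
    choose! u v hxuv huu hvv using hrep
    set w := u x₀ with hwdef
    have hw : iu w w = 1 := huu x₀ hx₀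
    set wp := wperp w with hwpdef
    set α : E2 F → ℂ := fun x => iu w (u x) with hα
    set β : E2 F → ℂ := fun x => iu wp (u x) with hβ
    have hiu : ∀ x y : E2 F, iu (u x) (u y) = conj (α x) * α y + conj (β x) * β y :=
      fun x y => iu_expand hw (u x) (u y)
    have habs : ∀ x ∈ S, conj (α x) * α x + conj (β x) * β x = 1 :=
      fun x hx => (hiu x x).symm.trans (huu x hx)
    have horth : ∀ x ∈ S, ∀ y ∈ S, x ≠ y → iu (u x) (u y) * ⟪v x, v y⟫_ℂ = 0 := by
      intro x hx y hy hxy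
      rw [← inner_tensor, ← hxuv x hx, ← hxuv y hy]
      exact hSd.2 x hx y hy hxy
    set A : Finset (E2 F) := S.filter (fun x => β x = 0) with hA
    set A' : Finset (E2 F) := S.filter (fun x => β x ≠ 0 ∧ α x = 0) with hA'
    set R : Finset (E2 F) := S.filter (fun x => α x ≠ 0 ∧ β x ≠ 0) with hR
    have hAα : ∀ x ∈ A, conj (α x) * α x = 1 := by
      intro x hx
      rw [Finset.mem_filter] at hx
      have := habs x hx.1
      rw [hx.2] at this; simpa using this
    have hA'β : ∀ x ∈ A', conj (β x) * β x = 1 := by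
      intro x hx
      rw [Finset.mem_filter] at hx
      have := habs x hx.1
      rw [hx.2.2] at this; simpa using this
    -- every x in A equals tensor w (α x • v x), and in A' tensor wp (β x • v x)
    have hAform : ∀ x ∈ A, x = tensor w (α x • v x) := by
      intro x hx
      rw [Finset.mem_filter] at hx
      have h2 : iu (wperp w) (u x) = 0 := hx.2
      have h3 : tensor (u x) (v x) = tensor w (α x • v x) := by
        rw [tensor_decomp hw (u x) (v x), h2, zero_smul, add_zero, tensor_smul_right]
      exact (hxuv x hx.1).trans h3
    have hA'form : ∀ x ∈ A', x = tensor wp (β x • v x) := by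
      intro x hx
      rw [Finset.mem_filter] at hx
      have h2 : iu w (u x) = 0 := hx.2.2
      have h3 : tensor (u x) (v x) = tensor wp (β x • v x) := by
        rw [tensor_decomp hw (u x) (v x), h2, zero_smul, zero_add, tensor_smul_right]
      exact (hxuv x hx.1).trans h3
    set P : Finset F := A.image (fun x => α x • v x) with hP
    set Q : Finset F := A'.image (fun x => β x • v x) with hQ
    set H : Submodule ℂ F := span ℂ ((P ∪ Q : Finset F) : Set F) with hH
    -- orthogonality of the v-parts
    have hvorth : ∀ x ∈ S, ∀ y ∈ S, x ≠ y → iu (u x) (u y) ≠ 0 → ⟪v x, v y⟫_ℂ = 0 := by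
      intro x hx y hy hxy hne
      rcases mul_eq_zero.1 (horth x hx y hy hxy) with h | h
      · exact absurd h hne
      · exact h
    have hPnorm : ∀ p ∈ P, ‖p‖ = 1 := by
      intro p hp
      obtain ⟨x, hx, rfl⟩ := Finset.mem_image.1 hp
      rw [norm_smul, hvv x (Finset.mem_filter.1 hx).1, mul_one,
        norm_one_of_conj_mul (hAα x hx)]
    have hQnorm : ∀ q ∈ Q, ‖q‖ = 1 := by
      intro q hq
      obtain ⟨x, hx, rfl⟩ := Finset.mem_image.1 hq
      rw [norm_smul, hvv x (Finset.mem_filter.1 hx).1, mul_one,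
        norm_one_of_conj_mul (hA'β x hx)]
    have hPorth : ∀ p ∈ P, ∀ q ∈ P, p ≠ q → ⟪p, q⟫_ℂ = 0 := by
      intro p hp q hq hpq
      obtain ⟨x, hx, rfl⟩ := Finset.mem_image.1 hp
      obtain ⟨y, hy, rfl⟩ := Finset.mem_image.1 hq
      have hxy : x ≠ y := fun h => hpq (by rw [h])
      have hxS := (Finset.mem_filter.1 hx).1
      have hyS := (Finset.mem_filter.1 hy).1
      have hiuxy : iu (u x) (u y) ≠ 0 := by
        rw [hiu, (Finset.mem_filter.1 hx).2, (Finset.mem_filter.1 hy).2]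
        simp only [map_zero, zero_mul, mul_zero, add_zero]
        exact mul_ne_zero (fun h => ne_zero_of_conj_mul (hAα x hx) (by
          simpa using congrArg conj h)) (ne_zero_of_conj_mul (hAα y hy))
      rw [inner_smul_left, inner_smul_right, hvorth x hxS y hyS hxy hiuxy,
        mul_zero, mul_zero]
    have hQorth : ∀ p ∈ Q, ∀ q ∈ Q, p ≠ q → ⟪p, q⟫_ℂ = 0 := by
      intro p hp q hq hpq
      obtain ⟨x, hx, rfl⟩ := Finset.mem_image.1 hp
      obtain ⟨y, hy, rfl⟩ := Finset.mem_image.1 hq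
      have hxy : x ≠ y := fun h => hpq (by rw [h])
      have hxS := (Finset.mem_filter.1 hx).1
      have hyS := (Finset.mem_filter.1 hy).1
      have hiuxy : iu (u x) (u y) ≠ 0 := by
        rw [hiu, (Finset.mem_filter.1 hx).2.2, (Finset.mem_filter.1 hy).2.2]
        simp only [map_zero, zero_mul, mul_zero, zero_add]
        exact mul_ne_zero (fun h => ne_zero_of_conj_mul (hA'β x hx) (by
          simpa using congrArg conj h)) (ne_zero_of_conj_mul (hA'β y hy))
      rw [inner_smul_left, inner_smul_right, hvorth x hxS y hyS hxy hiuxy,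
        mul_zero, mul_zero]
    obtain ⟨TH, hTH1, hTH2, hTH3, hTH4, hTH5⟩ := block H hw P Q
      (fun p hp => subset_span (by simp [Finset.mem_union, hp]))
      (fun q hq => subset_span (by simp [Finset.mem_union, hq]))
      (orthonormal_finset _ hPnorm hPorth) (orthonormal_finset _ hQnorm hQorth)
    -- x₀ belongs to A
    have hAx₀ : x₀ ∈ A := by
      refine Finset.mem_filter.2 ⟨hx₀, ?_⟩
      show iu wp (u x₀) = 0
      rw [hwpdef, ← hwdef, iu_conj, iu_wperp w, map_zero]
    -- the v-parts of R lie in Hᗮ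
    have hvR : ∀ x ∈ R, v x ∈ Hᗮ := by
      intro x hxR
      have hxfil := Finset.mem_filter.1 hxR
      have hxS := hxfil.1
      have hsub : ((P ∪ Q : Finset F) : Set F) ⊆ ((ℂ ∙ (v x))ᗮ : Set F) := by
        intro z hz
        rcases Finset.mem_union.1 (Finset.mem_coe.1 hz) with hz | hz
        · obtain ⟨y, hy, rfl⟩ := Finset.mem_image.1 hz
          have hyS := (Finset.mem_filter.1 hy).1
          have hyx : y ≠ x := by
            rintro rfl
            exact hxfil.2.2 (Finset.mem_filter.1 hy).2
          have hiuyx : iu (u y) (u x) ≠ 0 := by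
            rw [hiu, (Finset.mem_filter.1 hy).2]
            simp only [map_zero, zero_mul, add_zero]
            exact mul_ne_zero (fun h => ne_zero_of_conj_mul (hAα y hy)
              (by simpa using congrArg conj h)) hxfil.2.1
          have hvyx : ⟪v y, v x⟫_ℂ = 0 := hvorth y hyS x hxS hyx hiuyx
          rw [SetLike.mem_coe, Submodule.mem_orthogonal_singleton_iff_inner_left,
            inner_smul_left, hvyx, mul_zero]
        · obtain ⟨y, hy, rfl⟩ := Finset.mem_image.1 hz
          have hyS := (Finset.mem_filter.1 hy).1
          have hyx : y ≠ x := by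
            rintro rfl
            exact hxfil.2.1 (Finset.mem_filter.1 hy).2.2
          have hiuyx : iu (u y) (u x) ≠ 0 := by
            rw [hiu, (Finset.mem_filter.1 hy).2.2]
            simp only [map_zero, zero_mul, zero_add]
            exact mul_ne_zero (fun h => ne_zero_of_conj_mul (hA'β y hy)
              (by simpa using congrArg conj h)) hxfil.2.2
          have hvyx : ⟪v y, v x⟫_ℂ = 0 := hvorth y hyS x hxS hyx hiuyx
          rw [SetLike.mem_coe, Submodule.mem_orthogonal_singleton_iff_inner_left,
            inner_smul_left, hvyx, mul_zero]
      have hle : H ≤ (ℂ ∙ (v x))ᗮ := by rw [hH]; exact span_le.2 hsub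
      rw [Submodule.mem_orthogonal]
      intro z hz
      exact Submodule.mem_orthogonal_singleton_iff_inner_left.1 (hle hz)
    -- the residual set, living in ℂ² ⊗ Hᗮ
    set S' : Finset (E2 ↥Hᗮ) :=
      R.attach.image (fun x : {y // y ∈ R} =>
        tensor (u ↑x) (⟨v ↑x, hvR ↑x x.2⟩ : ↥Hᗮ)) with hS'
    have hRS : ∀ x ∈ R, x ∈ S := fun x hx => (Finset.mem_filter.1 hx).1
    have hembx : ∀ x : {y // y ∈ R},
        emb Hᗮ (tensor (u ↑x) (⟨v ↑x, hvR ↑x x.2⟩ : ↥Hᗮ)) = ↑x := by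
      intro x
      rw [emb_tensor]
      exact (hxuv ↑x (hRS ↑x x.2)).symm
    have hS'p : ∀ z ∈ S', IsProd z := by
      intro z hz
      obtain ⟨x, -, rfl⟩ := Finset.mem_image.1 hz
      exact ⟨_, _, rfl⟩
    have hS'on : Orthonormal ℂ (fun z : S' => (z : E2 ↥Hᗮ)) := by
      apply orthonormal_finset
      · intro z hz
        obtain ⟨x, -, rfl⟩ := Finset.mem_image.1 hz
        have hthis := hSd.1 ↑x (hRS ↑x x.2)
        rw [← hembx x, (emb Hᗮ).norm_map] at hthis
        exact hthis
      · intro z1 hz1 z2 hz2 hne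
        obtain ⟨x, -, rfl⟩ := Finset.mem_image.1 hz1
        obtain ⟨y, -, rfl⟩ := Finset.mem_image.1 hz2
        have hxy : (x : E2 F) ≠ (y : E2 F) := by
          intro h
          exact hne (by rw [Subtype.ext h])
        have hthis := hSd.2 ↑x (hRS ↑x x.2) ↑y (hRS ↑y y.2) hxy
        rw [← hembx x, ← hembx y, (emb Hᗮ).inner_map_map] at hthis
        exact hthis
    -- dimension drop
    have hHpos : 0 < Module.finrank ℂ ↥H := by
      rw [Module.finrank_pos_iff_exists_ne_zero]
      have hmem : α x₀ • v x₀ ∈ H :=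
        subset_span (Finset.mem_coe.2 (Finset.mem_union_left _
          (Finset.mem_image_of_mem _ hAx₀)))
      refine ⟨⟨α x₀ • v x₀, hmem⟩, ?_⟩
      intro hc
      have h0 : α x₀ • v x₀ = 0 := congrArg Subtype.val hc
      have := hPnorm _ (Finset.mem_image_of_mem _ hAx₀)
      rw [h0] at this; simp at this
    have hdim : Module.finrank ℂ ↥Hᗮ < n := by
      have hsum := Submodule.finrank_add_finrank_orthogonal (K := H)
      omega
    obtain ⟨T', hT'1, hT'2, hT'3, hT'4⟩ :=
      IH (Module.finrank ℂ ↥Hᗮ) (by omega) ↥Hᗮ rfl S' hS'p hS'on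
    have hT'd := orthonormal_finset' hT'3
    have hTHd := orthonormal_finset' hTH4
    refine ⟨TH ∪ T'.image (fun z => emb Hᗮ z), ?_, ?_, ?_, ?_⟩
    · -- S ⊆ T
      intro x hxS
      by_cases hb : β x = 0
      · have hxA : x ∈ A := Finset.mem_filter.2 ⟨hxS, hb⟩
        rw [hAform x hxA]
        exact Finset.mem_union_left _ (hTH1 _ (Finset.mem_image_of_mem _ hxA))
      · by_cases ha : α x = 0
        · have hxA' : x ∈ A' := Finset.mem_filter.2 ⟨hxS, hb, ha⟩
          rw [hA'form x hxA']
          exact Finset.mem_union_left _ (hTH2 _ (Finset.mem_image_of_mem _ hxA'))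
        · have hxR : x ∈ R := Finset.mem_filter.2 ⟨hxS, ha, hb⟩
          refine Finset.mem_union_right _ (Finset.mem_image.2
            ⟨tensor (u x) (⟨v x, hvR x hxR⟩ : ↥Hᗮ), ?_, ?_⟩)
          · exact hT'1 (Finset.mem_image.2 ⟨⟨x, hxR⟩, Finset.mem_attach _ _, rfl⟩)
          · exact hembx ⟨x, hxR⟩
    · -- products
      intro z hz
      rcases Finset.mem_union.1 hz with hz | hz
      · obtain ⟨uu, vv, hzz, -, -, -⟩ := hTH3 z hz
        exact ⟨uu, vv, hzz⟩
      · obtain ⟨z', hz', rfl⟩ := Finset.mem_image.1 hz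
        obtain ⟨uu, vv, rfl⟩ := hT'2 z' hz'
        exact ⟨uu, ↑vv, emb_tensor _ _ _⟩
    · -- orthonormal
      apply orthonormal_finset
      · intro z hz
        rcases Finset.mem_union.1 hz with hz | hz
        · exact hTHd.1 z hz
        · obtain ⟨z', hz', rfl⟩ := Finset.mem_image.1 hz
          rw [(emb Hᗮ).norm_map]
          exact hT'd.1 z' hz'
      · intro z1 hz1 z2 hz2 hne
        rcases Finset.mem_union.1 hz1 with hz1 | hz1 <;>
          rcases Finset.mem_union.1 hz2 with hz2 | hz2
        · exact hTHd.2 z1 hz1 z2 hz2 hne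
        · obtain ⟨uu, vv, rfl, -, -, hvvH⟩ := hTH3 z1 hz1
          obtain ⟨z', hz', rfl⟩ := Finset.mem_image.1 hz2
          exact cross_orth H hvvH uu z'
        · obtain ⟨uu, vv, rfl, -, -, hvvH⟩ := hTH3 z2 hz2
          obtain ⟨z', hz', rfl⟩ := Finset.mem_image.1 hz1
          rw [inner_eq_zero_symm]
          exact cross_orth H hvvH uu z'
        · obtain ⟨a, ha, rfl⟩ := Finset.mem_image.1 hz1
          obtain ⟨b, hb, rfl⟩ := Finset.mem_image.1 hz2
          have hab : a ≠ b := fun h => hne (by rw [h])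
          rw [(emb Hᗮ).inner_map_map]
          exact hT'd.2 a ha b hb hab
    · -- spanning
      apply span_top _ H
      · intro uu vv hv
        exact span_mono (Finset.coe_subset.2 Finset.subset_union_left)
          (hTH5 uu vv hv)
      · intro uu vv hv
        have hmem : tensor uu (⟨vv, hv⟩ : ↥Hᗮ) ∈ span ℂ (T' : Set (E2 ↥Hᗮ)) := by
          rw [hT'4]; trivial
        have happ := Submodule.apply_mem_span_image_of_mem_span
          (emb Hᗮ).toLinearMap hmem
        have heq : (emb Hᗮ).toLinearMap (tensor uu (⟨vv, hv⟩ : ↥Hᗮ)) = tensor uu vv :=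
          emb_tensor _ _ _
        rw [heq] at happ
        refine span_mono ?_ happ
        rintro _ ⟨z, hz, rfl⟩
        exact Finset.mem_coe.2 (Finset.mem_union_right _
          (Finset.mem_image_of_mem _ (Finset.mem_coe.1 hz)))


/-- currying isometry -/
def curry (d : ℕ) :
    EuclideanSpace ℂ (Fin 2 × Fin d) ≃ₗᵢ[ℂ] E2 (EuclideanSpace ℂ (Fin d)) :=
  LinearEquiv.isometryOfInner
    { toFun := fun x => (WithLp.toLp 2 (fun i => (WithLp.toLp 2 (fun j => x (i, j)) : EuclideanSpace ℂ (Fin d))) :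
        E2 (EuclideanSpace ℂ (Fin d)))
      invFun := fun g => (WithLp.toLp 2 (fun p => g p.1 p.2) : EuclideanSpace ℂ (Fin 2 × Fin d))
      left_inv := fun x => rfl
      right_inv := fun g => rfl
      map_add' := fun x y => rfl
      map_smul' := fun c x => rfl }
    (by
      intro x y
      simp only [PiLp.inner_apply]
      rw [Fintype.sum_prod_type]
      rfl)


lemma curry_prod {d : ℕ} (u : Fin 2 → ℂ) (v : Fin d → ℂ) :
    curry d (WithLp.toLp 2 (fun p => u p.1 * v p.2) : EuclideanSpace ℂ (Fin 2 × Fin d)) =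
      tensor (F := EuclideanSpace ℂ (Fin d)) u (WithLp.toLp 2 v) := rfl

end Stmt17Aux

open Stmt17Aux

/-- a finite set of pairwise orthogonal unit product vectors in `ℂ^2 ⊗ ℂ^d`
extends to an orthonormal basis of `ℂ^2 ⊗ ℂ^d` consisting only of product vectors. -/
theorem stmt17 (d : ℕ) [NeZero d] (S : Finset (EuclideanSpace ℂ (Fin 2 × Fin d)))
    (hprod : ∀ x ∈ S, IsProdVec x)
    (hON : Orthonormal ℂ (fun x : S => (x : EuclideanSpace ℂ (Fin 2 × Fin d)))) :
    ∃ T : Finset (EuclideanSpace ℂ (Fin 2 × Fin d)),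
      S ⊆ T ∧ (∀ x ∈ T, IsProdVec x) ∧
      Orthonormal ℂ (fun x : T => (x : EuclideanSpace ℂ (Fin 2 × Fin d))) ∧
      Submodule.span ℂ (T : Set (EuclideanSpace ℂ (Fin 2 × Fin d))) = ⊤ := by

  classical
  set e := curry d with he
  set S' : Finset (E2 (EuclideanSpace ℂ (Fin d))) := S.image (fun x => e x) with hS'
  have hSd := orthonormal_finset' hON
  have hS'p : ∀ z ∈ S', IsProd z := by
    intro z hz
    obtain ⟨x, hx, rfl⟩ := Finset.mem_image.1 hz
    obtain ⟨u, v, rfl⟩ := hprod x hx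
    exact ⟨u, WithLp.toLp 2 v, (curry_prod u v)⟩
  have hS'on : Orthonormal ℂ (fun z : S' => (z : E2 (EuclideanSpace ℂ (Fin d)))) := by
    apply orthonormal_finset
    · intro z hz
      obtain ⟨x, hx, rfl⟩ := Finset.mem_image.1 hz
      rw [e.norm_map]
      exact hSd.1 x hx
    · intro z1 hz1 z2 hz2 hne
      obtain ⟨x, hx, rfl⟩ := Finset.mem_image.1 hz1
      obtain ⟨y, hy, rfl⟩ := Finset.mem_image.1 hz2
      rw [e.inner_map_map]
      exact hSd.2 x hx y hy (fun h => hne (by rw [h]))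
  obtain ⟨T', hT'1, hT'2, hT'3, hT'4⟩ :=
    aux (Module.finrank ℂ (EuclideanSpace ℂ (Fin d))) (EuclideanSpace ℂ (Fin d)) rfl
      S' hS'p hS'on
  have hT'd := orthonormal_finset' hT'3
  refine ⟨T'.image (fun z => e.symm z), ?_, ?_, ?_, ?_⟩
  · intro x hx
    exact Finset.mem_image.2 ⟨e x, hT'1 (Finset.mem_image_of_mem _ hx),
      e.symm_apply_apply x⟩
  · intro x hx
    obtain ⟨z, hz, rfl⟩ := Finset.mem_image.1 hx
    obtain ⟨u, v, rfl⟩ := hT'2 z hz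
    refine ⟨u, v.ofLp, ?_⟩
    have hc := curry_prod (d := d) u v
    rw [← hc, he]
    exact e.symm_apply_apply _
  · apply orthonormal_finset
    · intro z hz
      obtain ⟨z', hz', rfl⟩ := Finset.mem_image.1 hz
      rw [e.symm.norm_map]
      exact hT'd.1 z' hz'
    · intro z1 hz1 z2 hz2 hne
      obtain ⟨a, ha, rfl⟩ := Finset.mem_image.1 hz1
      obtain ⟨b, hb, rfl⟩ := Finset.mem_image.1 hz2
      rw [e.symm.inner_map_map]
      exact hT'd.2 a ha b hb (fun h => hne (by rw [h]))
  · rw [eq_top_iff']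
    intro g
    have hmem : e g ∈ Submodule.span ℂ (T' : Set (E2 (EuclideanSpace ℂ (Fin d)))) := by
      rw [hT'4]; trivial
    have happ := Submodule.apply_mem_span_image_of_mem_span
      e.symm.toLinearEquiv.toLinearMap hmem
    rw [show e.symm.toLinearEquiv.toLinearMap (e g) = g from e.symm_apply_apply g] at happ
    refine Submodule.span_mono ?_ happ
    rintro _ ⟨z, hz, rfl⟩
    exact Finset.mem_coe.2 (Finset.mem_image_of_mem _ hz)


end
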